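/- Let P, Q, P̃, Q̃ be probability measures with P ≪ μ etc., and let β, β' be real numbers with β ≠ β'. For any estimator β̃ (a measurable real-valued function), the Hellinger affinity ρ(P,Q) = ∫ √(dP dQ) satisfies ρ(P,Q) ≤ (∫ ((β̃−β)²/(β−β')²) dP)^{1/2} + (∫ ((β̃−β')²/(β−β')²) dQ)^{1/2}, and consequently (1/2)(β−β')² ρ²(P,Q) ≤ ∫ (β̃−β)² dP + ∫ (β̃−β')² dQ. -/

import Mathlib

open MeasureTheory Real

/-- Hellinger-affinity two-point risk bound: for probability densities `p, q`
w.r.t. `μ`, distinct reals `β ≠ β'` and any estimator `β̃`,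
`ρ(P,Q) ≤ (∫ (β̃−β)²/(β−β')² dP)^{1/2} + (∫ (β̃−β')²/(β−β')² dQ)^{1/2}`, and
consequently `(1/2)(β−β')² ρ²(P,Q) ≤ ∫ (β̃−β)² dP + ∫ (β̃−β')² dQ`. -/
theorem hellinger_affinity_two_point_bound {α : Type*} [MeasurableSpace α]
    (μ : Measure α) [SigmaFinite μ]
    (p q : α → ℝ) (hp : Measurable p) (hq : Measurable q)
    (hp0 : ∀ x, 0 ≤ p x) (hq0 : ∀ x, 0 ≤ q x)
    (hpInt : Integrable p μ) (hqInt : Integrable q μ)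
    (hp1 : (∫ x, p x ∂μ) = 1) (hq1 : (∫ x, q x ∂μ) = 1)
    (β β' : ℝ) (hne : β ≠ β')
    (betaTilde : α → ℝ) (hβt : Measurable betaTilde)
    (hInt1 : Integrable (fun x => (betaTilde x - β) ^ 2 * p x) μ)
    (hInt2 : Integrable (fun x => (betaTilde x - β') ^ 2 * q x) μ) :
    (∫ x, Real.sqrt (p x * q x) ∂μ) ≤
        Real.sqrt (∫ x, (betaTilde x - β) ^ 2 / (β - β') ^ 2 * p x ∂μ) +
          Real.sqrt (∫ x, (betaTilde x - β') ^ 2 / (β - β') ^ 2 * q x ∂μ) ∧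
      (1 / 2) * (β - β') ^ 2 * (∫ x, Real.sqrt (p x * q x) ∂μ) ^ 2 ≤
        (∫ x, (betaTilde x - β) ^ 2 * p x ∂μ) +
          ∫ x, (betaTilde x - β') ^ 2 * q x ∂μ := by
  have hsub : β - β' ≠ 0 := sub_ne_zero.mpr hne
  have hd : 0 < |β - β'| := abs_pos.mpr hsub
  have hc : 0 < (β - β') ^ 2 := by positivity
  set d : ℝ := |β - β'| with hd_def
  have hdsq : d ^ 2 = (β - β') ^ 2 := sq_abs _
  set u1 : α → ℝ := fun x => |betaTilde x - β| * Real.sqrt (p x) / d with hu1_def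
  set u2 : α → ℝ := fun x => |betaTilde x - β'| * Real.sqrt (q x) / d with hu2_def
  set v : α → ℝ := fun x => Real.sqrt (q x) with hv_def
  set w : α → ℝ := fun x => Real.sqrt (p x) with hw_def
  have msqp : Measurable w := Real.continuous_sqrt.measurable.comp hp
  have msqq : Measurable v := Real.continuous_sqrt.measurable.comp hq
  have mu1 : Measurable u1 := ((hβt.sub measurable_const).abs.mul msqp).div_const d
  have mu2 : Measurable u2 := ((hβt.sub measurable_const).abs.mul msqq).div_const d
  -- L2 memberships
  have hu1Mem : MemLp u1 2 μ := by
    refine (memLp_two_iff_integrable_sq mu1.aestronglyMeasurable).mpr ?_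
    refine (hInt1.div_const ((β - β') ^ 2)).congr ?_
    refine Filter.Eventually.of_forall fun x => ?_
    simp only [hu1_def, div_pow, mul_pow, sq_abs, Real.sq_sqrt (hp0 x), hdsq]
  have hu2Mem : MemLp u2 2 μ := by
    refine (memLp_two_iff_integrable_sq mu2.aestronglyMeasurable).mpr ?_
    refine (hInt2.div_const ((β - β') ^ 2)).congr ?_
    refine Filter.Eventually.of_forall fun x => ?_
    simp only [hu2_def, div_pow, mul_pow, sq_abs, Real.sq_sqrt (hq0 x), hdsq]
  have hvMem : MemLp v 2 μ := by
    refine (memLp_two_iff_integrable_sq msqq.aestronglyMeasurable).mpr ?_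
    refine hqInt.congr (Filter.Eventually.of_forall fun x => ?_)
    simp [hv_def, Real.sq_sqrt (hq0 x)]
  have hwMem : MemLp w 2 μ := by
    refine (memLp_two_iff_integrable_sq msqp.aestronglyMeasurable).mpr ?_
    refine hpInt.congr (Filter.Eventually.of_forall fun x => ?_)
    simp [hw_def, Real.sq_sqrt (hp0 x)]
  have h211 : (1 : ENNReal) / 1 = 1 / 2 + 1 / 2 := by
    rw [ENNReal.add_halves]; norm_num
  have Iuv : Integrable (fun x => u1 x * v x) μ :=
    memLp_one_iff_integrable.mp (hvMem.smul hu1Mem (r := 1))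
  have Iwu2 : Integrable (fun x => w x * u2 x) μ :=
    memLp_one_iff_integrable.mp (hu2Mem.smul hwMem (r := 1))
  -- integrability of the Hellinger integrand
  have hρInt : Integrable (fun x => Real.sqrt (p x * q x)) μ := by
    refine ((hpInt.add hqInt).div_const 2).mono'
      ((msqp.mul msqq).aestronglyMeasurable.congr ?_)
      (Filter.Eventually.of_forall fun x => ?_)
    · exact Filter.Eventually.of_forall fun x => (Real.sqrt_mul (hp0 x) _).symm
    · rw [Real.norm_eq_abs, abs_of_nonneg (Real.sqrt_nonneg _), Real.sqrt_mul (hp0 x)]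
      simp only [Pi.add_apply]
      nlinarith [Real.sq_sqrt (hp0 x), Real.sq_sqrt (hq0 x), Real.sqrt_nonneg (p x),
        Real.sqrt_nonneg (q x), sq_nonneg (Real.sqrt (p x) - Real.sqrt (q x))]
  -- pointwise triangle-inequality bound
  have hpoint : ∀ x, Real.sqrt (p x * q x) ≤ u1 x * v x + w x * u2 x := by
    intro x
    have habs : d ≤ |betaTilde x - β| + |betaTilde x - β'| := by
      calc d = |β - β'| := rfl
        _ ≤ |β - betaTilde x| + |betaTilde x - β'| := abs_sub_le _ _ _
        _ = |betaTilde x - β| + |betaTilde x - β'| := by rw [abs_sub_comm]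
    have hs : 0 ≤ Real.sqrt (p x) * Real.sqrt (q x) :=
      mul_nonneg (Real.sqrt_nonneg _) (Real.sqrt_nonneg _)
    have h1 : 1 ≤ (|betaTilde x - β| + |betaTilde x - β'|) / d := (one_le_div hd).mpr habs
    calc Real.sqrt (p x * q x) = Real.sqrt (p x) * Real.sqrt (q x) * 1 := by
          rw [Real.sqrt_mul (hp0 x), mul_one]
      _ ≤ Real.sqrt (p x) * Real.sqrt (q x) * ((|betaTilde x - β| + |betaTilde x - β'|) / d) :=
          mul_le_mul_of_nonneg_left h1 hs
      _ = u1 x * v x + w x * u2 x := by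
          simp only [hu1_def, hu2_def, hv_def, hw_def]
          field_simp
  -- Cauchy–Schwarz
  have hpq2 : (2 : ℝ).HolderConjugate 2 := Real.HolderConjugate.two_two
  have h2e : ENNReal.ofReal (2 : ℝ) = 2 := by norm_num
  have hA_eq : (∫ x, u1 x ^ (2 : ℝ) ∂μ) = ∫ x, (betaTilde x - β) ^ 2 / (β - β') ^ 2 * p x ∂μ := by
    refine integral_congr_ae (Filter.Eventually.of_forall fun x => ?_)
    simp only [show (2 : ℝ) = ((2 : ℕ) : ℝ) by norm_num, Real.rpow_natCast]
    simp only [hu1_def, div_pow, mul_pow, sq_abs, Real.sq_sqrt (hp0 x), hdsq]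
    ring
  have hB_eq : (∫ x, u2 x ^ (2 : ℝ) ∂μ) = ∫ x, (betaTilde x - β') ^ 2 / (β - β') ^ 2 * q x ∂μ := by
    refine integral_congr_ae (Filter.Eventually.of_forall fun x => ?_)
    simp only [show (2 : ℝ) = ((2 : ℕ) : ℝ) by norm_num, Real.rpow_natCast]
    simp only [hu2_def, div_pow, mul_pow, sq_abs, Real.sq_sqrt (hq0 x), hdsq]
    ring
  have hv_eq : (∫ x, v x ^ (2 : ℝ) ∂μ) = 1 := by
    rw [← hq1]
    refine integral_congr_ae (Filter.Eventually.of_forall fun x => ?_)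
    simp only [show (2 : ℝ) = ((2 : ℕ) : ℝ) by norm_num, Real.rpow_natCast]
    simp [hv_def, Real.sq_sqrt (hq0 x)]
  have hw_eq : (∫ x, w x ^ (2 : ℝ) ∂μ) = 1 := by
    rw [← hp1]
    refine integral_congr_ae (Filter.Eventually.of_forall fun x => ?_)
    simp only [show (2 : ℝ) = ((2 : ℕ) : ℝ) by norm_num, Real.rpow_natCast]
    simp [hw_def, Real.sq_sqrt (hp0 x)]
  have hu1nn : 0 ≤ᵐ[μ] u1 := Filter.Eventually.of_forall fun x =>
    div_nonneg (mul_nonneg (abs_nonneg _) (Real.sqrt_nonneg _)) hd.le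
  have hu2nn : 0 ≤ᵐ[μ] u2 := Filter.Eventually.of_forall fun x =>
    div_nonneg (mul_nonneg (abs_nonneg _) (Real.sqrt_nonneg _)) hd.le
  have hvnn : 0 ≤ᵐ[μ] v := Filter.Eventually.of_forall fun x => Real.sqrt_nonneg _
  have hwnn : 0 ≤ᵐ[μ] w := Filter.Eventually.of_forall fun x => Real.sqrt_nonneg _
  have hCS1 : (∫ x, u1 x * v x ∂μ) ≤
      Real.sqrt (∫ x, (betaTilde x - β) ^ 2 / (β - β') ^ 2 * p x ∂μ) := by
    have := integral_mul_le_Lp_mul_Lq_of_nonneg hpq2 hu1nn hvnn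
      (h2e ▸ hu1Mem) (h2e ▸ hvMem)
    rw [hA_eq, hv_eq] at this
    simpa [Real.sqrt_eq_rpow, one_div] using this
  have hCS2 : (∫ x, w x * u2 x ∂μ) ≤
      Real.sqrt (∫ x, (betaTilde x - β') ^ 2 / (β - β') ^ 2 * q x ∂μ) := by
    have := integral_mul_le_Lp_mul_Lq_of_nonneg hpq2 hwnn hu2nn
      (h2e ▸ hwMem) (h2e ▸ hu2Mem)
    rw [hB_eq, hw_eq] at this
    simpa [Real.sqrt_eq_rpow, one_div] using this
  -- first part
  have part1 : (∫ x, Real.sqrt (p x * q x) ∂μ) ≤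
      Real.sqrt (∫ x, (betaTilde x - β) ^ 2 / (β - β') ^ 2 * p x ∂μ) +
        Real.sqrt (∫ x, (betaTilde x - β') ^ 2 / (β - β') ^ 2 * q x ∂μ) := by
    calc (∫ x, Real.sqrt (p x * q x) ∂μ)
        ≤ ∫ x, u1 x * v x + w x * u2 x ∂μ := integral_mono hρInt (Iuv.add Iwu2) hpoint
      _ = (∫ x, u1 x * v x ∂μ) + ∫ x, w x * u2 x ∂μ := integral_add Iuv Iwu2
      _ ≤ _ := add_le_add hCS1 hCS2
  refine ⟨part1, ?_⟩
  -- second part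
  set ρ : ℝ := ∫ x, Real.sqrt (p x * q x) ∂μ with hρ_def
  set A : ℝ := ∫ x, (betaTilde x - β) ^ 2 / (β - β') ^ 2 * p x ∂μ with hA_def
  set B : ℝ := ∫ x, (betaTilde x - β') ^ 2 / (β - β') ^ 2 * q x ∂μ with hB_def
  have hρ0 : 0 ≤ ρ := integral_nonneg fun x => Real.sqrt_nonneg _
  have hA0 : 0 ≤ A := integral_nonneg fun x =>
    mul_nonneg (div_nonneg (sq_nonneg _) (sq_nonneg _)) (hp0 x)
  have hB0 : 0 ≤ B := integral_nonneg fun x =>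
    mul_nonneg (div_nonneg (sq_nonneg _) (sq_nonneg _)) (hq0 x)
  have hAI : A = (∫ x, (betaTilde x - β) ^ 2 * p x ∂μ) / (β - β') ^ 2 := by
    rw [hA_def, ← integral_div]
    exact integral_congr_ae (Filter.Eventually.of_forall fun x => by ring)
  have hBI : B = (∫ x, (betaTilde x - β') ^ 2 * q x ∂μ) / (β - β') ^ 2 := by
    rw [hB_def, ← integral_div]
    exact integral_congr_ae (Filter.Eventually.of_forall fun x => by ring)
  have h2 : ρ ^ 2 ≤ (Real.sqrt A + Real.sqrt B) ^ 2 := by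
    have := pow_le_pow_left₀ hρ0 part1 2
    simpa using this
  have h3 : (Real.sqrt A + Real.sqrt B) ^ 2 ≤ 2 * (A + B) := by
    nlinarith [sq_nonneg (Real.sqrt A - Real.sqrt B), Real.sq_sqrt hA0, Real.sq_sqrt hB0]
  have h4 : ρ ^ 2 ≤ 2 * (A + B) := h2.trans h3
  rw [hAI, hBI] at h4
  calc (1 / 2) * (β - β') ^ 2 * ρ ^ 2
      ≤ (1 / 2) * (β - β') ^ 2 *
        (2 * ((∫ x, (betaTilde x - β) ^ 2 * p x ∂μ) / (β - β') ^ 2 +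
          (∫ x, (betaTilde x - β') ^ 2 * q x ∂μ) / (β - β') ^ 2)) :=
        mul_le_mul_of_nonneg_left h4 (by positivity)
    _ = (∫ x, (betaTilde x - β) ^ 2 * p x ∂μ) + ∫ x, (betaTilde x - β') ^ 2 * q x ∂μ := by
        field_simp
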